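/- Let X be a measurable space with σ-finite measure μ, and let p_tr and p_te be probability densities on X with p_tr(x) + p_te(x) > 0 μ-a.e. Then the functional V(D) = ∫ [p_tr(x) log D(x) + p_te(x) log(1 − D(x))] dμ(x) over measurable functions D: X → (0,1) is maximized by D*(x) = p_tr(x)/(p_tr(x) + p_te(x)) (μ-a.e. where defined), and consequently 1 − D*(x) = p_te(x)/(p_tr(x) + p_te(x)), which for p_te(x) > 0 equals 1/(p_tr(x)/p_te(x) + 1). -/

import Mathlib

open MeasureTheory

lemma iwan_half (a c s : ℝ) (ha : 0 ≤ a) (hs : 0 < s) (hc : 0 < c) :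
    a * Real.log c - a * Real.log (a / s) ≤ c * s - a := by
  rcases eq_or_lt_of_le ha with h | h
  · simp [← h]; positivity
  · have key : Real.log (c * s / a) ≤ c * s / a - 1 :=
      Real.log_le_sub_one_of_pos (by positivity)
    have hlog : Real.log c - Real.log (a / s) = Real.log (c * s / a) := by
      rw [Real.log_div (by positivity) (ne_of_gt h), Real.log_mul (ne_of_gt hc) (ne_of_gt hs),
        Real.log_div (ne_of_gt h) (ne_of_gt hs)]
      ring
    have h2 := mul_le_mul_of_nonneg_left key ha
    have h3 : a * (c * s / a - 1) = c * s - a := by field_simp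
    calc a * Real.log c - a * Real.log (a / s) = a * (Real.log c - Real.log (a / s)) := by ring
      _ = a * Real.log (c * s / a) := by rw [hlog]
      _ ≤ a * (c * s / a - 1) := h2
      _ = c * s - a := h3

lemma iwan_point (a b t : ℝ) (ha : 0 ≤ a) (hb : 0 ≤ b) (hab : 0 < a + b)
    (ht0 : 0 < t) (ht1 : t < 1) :
    a * Real.log t + b * Real.log (1 - t) ≤
      a * Real.log (a / (a + b)) + b * Real.log (1 - a / (a + b)) := by
  have h1 : 1 - a / (a + b) = b / (a + b) := by field_simp; ring
  rw [h1]
  have hA : a * Real.log t - a * Real.log (a / (a + b)) ≤ t * (a + b) - a :=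
    iwan_half a t (a + b) ha hab ht0
  have hB : b * Real.log (1 - t) - b * Real.log (b / (a + b)) ≤ (1 - t) * (a + b) - b :=
    iwan_half b (1 - t) (a + b) hb hab (by linarith)
  nlinarith

/-- IWAN optimal discriminator: the GAN objective
`V(D) = ∫ p_tr log D + p_te log(1 − D) dμ` over measurable `D : X → (0,1)` is maximized by
`D*(x) = p_tr(x)/(p_tr(x) + p_te(x))`, and `1 − D*(x) = p_te(x)/(p_tr(x) + p_te(x))`, which for
`p_te(x) > 0` equals `1/(p_tr(x)/p_te(x) + 1)`. -/
theorem iwan_optimal_discriminator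
    {X : Type*} [MeasurableSpace X] (μ : Measure X) [SigmaFinite μ]
    (ptr pte : X → ℝ) (hm1 : Measurable ptr) (hm2 : Measurable pte)
    (h0tr : ∀ x, 0 ≤ ptr x) (h0te : ∀ x, 0 ≤ pte x)
    (hitr : Integrable ptr μ) (hite : Integrable pte μ)
    (htr1 : ∫ x, ptr x ∂μ = 1) (hte1 : ∫ x, pte x ∂μ = 1)
    (hpos : ∀ᵐ x ∂μ, 0 < ptr x + pte x) :
    (∀ D : X → ℝ, Measurable D → (∀ x, D x ∈ Set.Ioo (0 : ℝ) 1) →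
        Integrable (fun x => ptr x * Real.log (D x) + pte x * Real.log (1 - D x)) μ →
        ∫ x, ptr x * Real.log (D x) + pte x * Real.log (1 - D x) ∂μ
          ≤ ∫ x, ptr x * Real.log (ptr x / (ptr x + pte x))
              + pte x * Real.log (1 - ptr x / (ptr x + pte x)) ∂μ)
    ∧ (∀ x, 0 < pte x →
        1 - ptr x / (ptr x + pte x) = pte x / (ptr x + pte x)
        ∧ pte x / (ptr x + pte x) = 1 / (ptr x / pte x + 1)) := by
  constructor
  · intro D hDm hDio hDint
    have hineq : ∀ᵐ x ∂μ,
        ptr x * Real.log (D x) + pte x * Real.log (1 - D x) ≤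
          ptr x * Real.log (ptr x / (ptr x + pte x))
            + pte x * Real.log (1 - ptr x / (ptr x + pte x)) := by
      filter_upwards [hpos] with x hx
      exact iwan_point (ptr x) (pte x) (D x) (h0tr x) (h0te x) hx
        (hDio x).1 (hDio x).2
    by_cases hint : Integrable (fun x => ptr x * Real.log (ptr x / (ptr x + pte x))
        + pte x * Real.log (1 - ptr x / (ptr x + pte x))) μ
    · exact integral_mono_ae hDint hint hineq
    · rw [integral_undef hint]
      apply integral_nonpos
      intro x
      have h1 : Real.log (D x) ≤ 0 := Real.log_nonpos (le_of_lt (hDio x).1) (le_of_lt (hDio x).2)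
      have h2 : Real.log (1 - D x) ≤ 0 := Real.log_nonpos (by linarith [(hDio x).2]) (by linarith [(hDio x).1])
      have := mul_nonpos_of_nonneg_of_nonpos (h0tr x) h1
      have := mul_nonpos_of_nonneg_of_nonpos (h0te x) h2
      simpa using add_nonpos ‹ptr x * Real.log (D x) ≤ 0› ‹pte x * Real.log (1 - D x) ≤ 0›
  · intro x hx
    have hs : 0 < ptr x + pte x := by linarith [h0tr x]
    constructor
    · field_simp; ring
    · rw [div_add' _ _ _ (ne_of_gt hx), one_div_div]; ring_nf
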